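/- Let e ∈ Λ be a nonzero primitive isotropic vector: e ⋆ e = 0, and whenever e = α·w with α ∈ ℤ[ζ_k] and w ∈ Λ, α is a unit of ℤ[ζ_k]. Then there exists f ∈ Λ with f ⋆ f = 0 and f ⋆ e = 1 + ζ_k. -/

import Mathlib

noncomputable section

open Matrix Complex
open scoped MatrixGroups Pointwise

/-- `ζ_k = exp(2πi/k)`, a primitive `k`-th root of unity. -/
def zetaC (k : ℕ) : ℂ := Complex.exp (2 * Real.pi * Complex.I / k)

/-- `ℤ[ζ_k]`, the subring of `ℂ` generated by `ζ_k`. -/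
def Rk (k : ℕ) : Subring ℂ := Subring.closure {zetaC k}

/-- The Hermitian form `x ⋆ y = ∑ conj(x i) * A i j * y j` attached to a Gram matrix `A`. -/
def hermF {n : ℕ} (A : Matrix (Fin n) (Fin n) ℂ) (x y : Fin n → ℂ) : ℂ :=
  ∑ i, ∑ j, (starRingEnd ℂ) (x i) * A i j * y j

/-- Coercion of a vector with entries in `ℤ[ζ_k]` to a complex vector. -/
def cv {k n : ℕ} (v : Fin n → Rk k) : Fin n → ℂ := fun i => (v i : ℂ)

/-- The real inner product `x · y = (2/|1+ζ_k|²) Re (x ⋆ y)`. -/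
def dotF {n : ℕ} (k : ℕ) (A : Matrix (Fin n) (Fin n) ℂ) (x y : Fin n → ℂ) : ℝ :=
  2 / Complex.normSq (1 + zetaC k) * (hermF A x y).re

/-- The tridiagonal Gram matrix `G_k`. -/
def Gmat (k n : ℕ) : Matrix (Fin n) (Fin n) ℂ :=
  Matrix.of fun i j =>
    if i = j then -((1 + zetaC k) * (1 + (starRingEnd ℂ) (zetaC k)))
    else if (i : ℕ) + 1 = (j : ℕ) then 1 + (starRingEnd ℂ) (zetaC k)
    else if (j : ℕ) + 1 = (i : ℕ) then 1 + zetaC k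
    else 0

/-- `U(Λ)`: the group of `ℤ[ζ_k]`-module automorphisms of `Λ = ℤ[ζ_k]^n` preserving the
Hermitian form with Gram matrix `A`. -/
def Ugrp (k n : ℕ) (A : Matrix (Fin n) (Fin n) ℂ) : Subgroup (GL (Fin n) ↥(Rk k)) where
  carrier := {g | ∀ x y : Fin n → Rk k,
    hermF A (cv ((g : Matrix (Fin n) (Fin n) ↥(Rk k)) *ᵥ x))
            (cv ((g : Matrix (Fin n) (Fin n) ↥(Rk k)) *ᵥ y)) = hermF A (cv x) (cv y)}
  one_mem' := by
    intro x y
    rw [Units.val_one, Matrix.one_mulVec, Matrix.one_mulVec]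
  mul_mem' := by
    intro a b ha hb x y
    rw [Units.val_mul, ← Matrix.mulVec_mulVec, ← Matrix.mulVec_mulVec]
    rw [ha ((b : Matrix (Fin n) (Fin n) ↥(Rk k)) *ᵥ x) ((b : Matrix (Fin n) (Fin n) ↥(Rk k)) *ᵥ y)]
    exact hb x y
  inv_mem' := by
    intro g hg x y
    have h := hg (((g⁻¹ : GL (Fin n) ↥(Rk k)) : Matrix (Fin n) (Fin n) ↥(Rk k)) *ᵥ x)
      (((g⁻¹ : GL (Fin n) ↥(Rk k)) : Matrix (Fin n) (Fin n) ↥(Rk k)) *ᵥ y)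
    rw [Matrix.mulVec_mulVec, Matrix.mulVec_mulVec, ← Units.val_mul, mul_inv_cancel,
      Units.val_one, Matrix.one_mulVec, Matrix.one_mulVec] at h
    exact h.symm

/-- The stabilizer of a lattice vector `v` in a subgroup `Γ` of the general linear group. -/
def stab {k n : ℕ} (Γ : Subgroup (GL (Fin n) ↥(Rk k))) (v : Fin n → Rk k) :
    Set (GL (Fin n) ↥(Rk k)) :=
  {g | g ∈ Γ ∧ (g : Matrix (Fin n) (Fin n) ↥(Rk k)) *ᵥ v = v}

/-- Two lattice vectors lie in the same `Γ`-orbit. -/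
def sameOrbit {k n : ℕ} (Γ : Subgroup (GL (Fin n) ↥(Rk k))) (v w : Fin n → Rk k) : Prop :=
  ∃ g ∈ Γ, (g : Matrix (Fin n) (Fin n) ↥(Rk k)) *ᵥ v = w

variable {n : ℕ} {A : Matrix (Fin n) (Fin n) ℂ}

lemma hermF_add_left (x y z : Fin n → ℂ) :
    hermF A (x + y) z = hermF A x z + hermF A y z := by
  simp only [hermF, Pi.add_apply, map_add, add_mul, Finset.sum_add_distrib]

lemma hermF_add_right (x y z : Fin n → ℂ) :
    hermF A x (y + z) = hermF A x y + hermF A x z := by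
  simp only [hermF, Pi.add_apply, mul_add, Finset.sum_add_distrib]

lemma hermF_smul_left (c : ℂ) (x y : Fin n → ℂ) :
    hermF A (c • x) y = (starRingEnd ℂ) c * hermF A x y := by
  simp only [hermF, Pi.smul_apply, smul_eq_mul, _root_.map_mul, Finset.mul_sum]
  refine Finset.sum_congr rfl fun i _ => Finset.sum_congr rfl fun j _ => by ring

lemma hermF_smul_right (c : ℂ) (x y : Fin n → ℂ) :
    hermF A x (c • y) = c * hermF A x y := by
  simp only [hermF, Pi.smul_apply, smul_eq_mul, Finset.mul_sum]
  refine Finset.sum_congr rfl fun i _ => Finset.sum_congr rfl fun j _ => by ring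

lemma hermF_conj (hA : A.IsHermitian) (x y : Fin n → ℂ) :
    hermF A x y = (starRingEnd ℂ) (hermF A y x) := by
  simp only [hermF, map_sum]
  rw [Finset.sum_comm]
  refine Finset.sum_congr rfl fun i _ => Finset.sum_congr rfl fun j _ => ?_
  have hAij : (starRingEnd ℂ) (A j i) = A i j := by
    conv_rhs => rw [← hA]
    rfl
  rw [_root_.map_mul, _root_.map_mul, Complex.conj_conj, ← hAij, Complex.conj_conj]
  ring

lemma hermF_single (i₀ : Fin n) (y : Fin n → ℂ) :
    hermF A (fun i => if i = i₀ then 1 else 0) y = ∑ j, A i₀ j * y j := by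
  simp only [hermF]
  rw [Finset.sum_eq_single i₀]
  · simp
  · intro b _ hb
    simp [hb]
  · simp

lemma hermF_mem {k : ℕ} (hconj : ∀ x ∈ Rk k, (starRingEnd ℂ) x ∈ Rk k)
    (hentries : ∀ i j, A i j ∈ Rk k) (x y : Fin n → ℂ)
    (hx : ∀ i, x i ∈ Rk k) (hy : ∀ i, y i ∈ Rk k) : hermF A x y ∈ Rk k := by
  refine Subring.sum_mem _ fun i _ => Subring.sum_mem _ fun j _ =>
    mul_mem (mul_mem (hconj _ (hx i)) (hentries i j)) (hy j)

lemma zeta_eq (k : ℕ) :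
    zetaC k = Real.cos (2*Real.pi/k) + Real.sin (2*Real.pi/k) * I := by
  rw [zetaC]
  rw [show 2 * (Real.pi:ℂ) * I / (k:ℕ) = ((2*Real.pi/(k:ℝ) : ℝ) : ℂ) * I by push_cast; ring]
  rw [Complex.exp_mul_I, ← ofReal_cos, ← ofReal_sin]

lemma zeta_re (k : ℕ) : (zetaC k).re = Real.cos (2*Real.pi/k) := by
  rw [zeta_eq]
  simp only [Complex.add_re, Complex.mul_re, Complex.I_re, Complex.I_im,
    Complex.ofReal_re, Complex.ofReal_im]
  ring
lemma zeta_im (k : ℕ) : (zetaC k).im = Real.sin (2*Real.pi/k) := by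
  rw [zeta_eq]
  simp only [Complex.add_im, Complex.mul_im, Complex.I_re, Complex.I_im,
    Complex.ofReal_re, Complex.ofReal_im]
  ring

lemma zeta_mul_conj (k : ℕ) : zetaC k * (starRingEnd ℂ) (zetaC k) = 1 := by
  rw [Complex.mul_conj]
  rw [← Complex.sq_norm, zetaC]
  rw [show 2 * (Real.pi:ℂ) * I / (k:ℕ) = ((2*Real.pi/(k:ℝ) : ℝ) : ℂ) * I by push_cast; ring]
  rw [Complex.norm_exp_ofReal_mul_I]
  norm_num

/-- main per-k facts -/
lemma zeta_facts (k : ℕ) (hk : k ∈ ({3,4,6} : Set ℕ)) :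
    ∃ d : ℤ, (starRingEnd ℂ) (zetaC k) = (d:ℂ) - zetaC k ∧ 0 < (zetaC k).im ∧ |d| ≤ 1 := by
  have him : ∀ t : ℝ, 0 < t → t < Real.pi → 0 < Real.sin t := fun t h1 h2 =>
    Real.sin_pos_of_pos_of_lt_pi h1 h2
  have hpi := Real.pi_pos
  rcases hk with h | h | h
  · -- k = 3
    subst h
    refine ⟨-1, ?_, ?_, by norm_num⟩
    · have : (2*Real.pi/(3:ℕ)) = Real.pi - Real.pi/3 := by push_cast; ring
      rw [show (starRingEnd ℂ) (zetaC 3) = (2*(zetaC 3).re : ℝ) - zetaC 3 by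
        apply Complex.ext <;> simp [Complex.conj_re, Complex.conj_im] <;> ring]
      rw [zeta_re, this, Real.cos_pi_sub, Real.cos_pi_div_three]
      norm_num
    · rw [zeta_im]
      have : (2*Real.pi/(3:ℕ)) = Real.pi - Real.pi/3 := by push_cast; ring
      rw [this, Real.sin_pi_sub]
      exact him _ (by positivity) (by linarith [Real.pi_gt_three])
  · subst h
    refine ⟨0, ?_, ?_, by norm_num⟩
    · have : (2*Real.pi/(4:ℕ)) = Real.pi/2 := by push_cast; ring
      rw [show (starRingEnd ℂ) (zetaC 4) = (2*(zetaC 4).re : ℝ) - zetaC 4 by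
        apply Complex.ext <;> simp [Complex.conj_re, Complex.conj_im] <;> ring]
      rw [zeta_re, this, Real.cos_pi_div_two]
      norm_num
    · rw [zeta_im]
      have : (2*Real.pi/(4:ℕ)) = Real.pi/2 := by push_cast; ring
      rw [this]
      exact him _ (by positivity) (by linarith)
  · subst h
    refine ⟨1, ?_, ?_, by norm_num⟩
    · have : (2*Real.pi/(6:ℕ)) = Real.pi/3 := by push_cast; ring
      rw [show (starRingEnd ℂ) (zetaC 6) = (2*(zetaC 6).re : ℝ) - zetaC 6 by
        apply Complex.ext <;> simp [Complex.conj_re, Complex.conj_im] <;> ring]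
      rw [zeta_re, this, Real.cos_pi_div_three]
      norm_num
    · rw [zeta_im]
      have : (2*Real.pi/(6:ℕ)) = Real.pi/3 := by push_cast; ring
      rw [this]
      exact him _ (by positivity) (by linarith)


variable {k : ℕ} {d : ℤ}

lemma mem_Rk_iff (hd : (starRingEnd ℂ) (zetaC k) = (d:ℂ) - zetaC k)
    (hu : zetaC k * (starRingEnd ℂ) (zetaC k) = 1) (x : ℂ) :
    x ∈ Rk k ↔ ∃ a b : ℤ, x = (a:ℂ) + (b:ℂ) * zetaC k := by
  have hsq : zetaC k ^ 2 = (d:ℂ) * zetaC k - 1 := by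
    rw [hd] at hu; linear_combination -hu
  constructor
  · intro hx
    induction hx using Subring.closure_induction with
    | mem x hx => exact ⟨0, 1, by simp [Set.mem_singleton_iff.mp hx]⟩
    | zero => exact ⟨0, 0, by simp⟩
    | one => exact ⟨1, 0, by simp⟩
    | add x y hx hy ihx ihy =>
        obtain ⟨a, b, rfl⟩ := ihx; obtain ⟨a', b', rfl⟩ := ihy
        exact ⟨a + a', b + b', by push_cast; ring⟩
    | neg x hx ihx =>
        obtain ⟨a, b, rfl⟩ := ihx; exact ⟨-a, -b, by push_cast; ring⟩
    | mul x y hx hy ihx ihy =>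
        obtain ⟨a, b, rfl⟩ := ihx; obtain ⟨a', b', rfl⟩ := ihy
        refine ⟨a*a' - b*b', a*b' + b*a' + b*b'*d, ?_⟩
        have : ((a:ℂ)+b*zetaC k) * ((a':ℂ)+b'*zetaC k)
            = a*a' + (a*b'+b*a')*zetaC k + (b*b')*(zetaC k^2) := by ring
        rw [this, hsq]; push_cast; ring
  · rintro ⟨a, b, rfl⟩
    exact add_mem (intCast_mem _ a)
      (mul_mem (intCast_mem _ b) (Subring.subset_closure rfl))
lemma conj_mem_Rk (hd : (starRingEnd ℂ) (zetaC k) = (d:ℂ) - zetaC k)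
    (hu : zetaC k * (starRingEnd ℂ) (zetaC k) = 1) {x : ℂ} (hx : x ∈ Rk k) :
    (starRingEnd ℂ) x ∈ Rk k := by
  obtain ⟨a, b, rfl⟩ := (mem_Rk_iff hd hu x).mp hx
  rw [(mem_Rk_iff hd hu _)]
  refine ⟨a + b*d, -b, ?_⟩
  rw [_root_.map_add, _root_.map_mul, hd, map_intCast, map_intCast]
  push_cast
  ring

lemma normSq_Rk (hd : (starRingEnd ℂ) (zetaC k) = (d:ℂ) - zetaC k)
    (hu : zetaC k * (starRingEnd ℂ) (zetaC k) = 1) (hdle : |d| ≤ 1)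
    {x : ℂ} (hx : x ∈ Rk k) :
    ∃ n : ℕ, (Complex.normSq x : ℝ) = n ∧ (x ≠ 0 → 1 ≤ n) := by
  obtain ⟨a, b, rfl⟩ := (mem_Rk_iff hd hu x).mp hx
  have hsq : zetaC k ^ 2 = (d:ℂ) * zetaC k - 1 := by
    rw [hd] at hu; linear_combination -hu
  have key : ((a:ℂ) + b*zetaC k) * (starRingEnd ℂ) ((a:ℂ) + b*zetaC k)
      = ((a^2 + a*b*d + b^2 : ℤ) : ℂ) := by
    rw [_root_.map_add, _root_.map_mul, hd, map_intCast, map_intCast]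
    push_cast
    linear_combination (-(b:ℂ)^2) * hsq
  have hd2 : d^2 ≤ 1 := by nlinarith [abs_mul_abs_self d, abs_nonneg d]
  have hnn : 0 ≤ a^2 + a*b*d + b^2 := by nlinarith [sq_nonneg (2*a + b*d), sq_nonneg b]
  refine ⟨(a^2 + a*b*d + b^2).toNat, ?_, ?_⟩
  · have := Complex.mul_conj ((a:ℂ) + b*zetaC k)
    rw [key] at this
    have h2 : ((Complex.normSq ((a:ℂ) + b*zetaC k) : ℝ):ℂ) = (((a^2 + a*b*d + b^2 : ℤ):ℝ):ℂ) := by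
      rw [← this]; push_cast; ring
    have h3 := Complex.ofReal_injective h2
    rw [h3]
    exact_mod_cast (Int.toNat_of_nonneg hnn).symm
  · intro hne
    have hz : a^2 + a*b*d + b^2 ≠ 0 := by
      intro h0
      have hb : b = 0 := by nlinarith [sq_nonneg (2*a + b*d), sq_nonneg b]
      have h0' : a^2 = 0 := by rw [hb] at h0; linarith [h0]
      have ha : a = 0 := by nlinarith [sq_nonneg a]
      exact hne (by simp [ha, hb])
    omega

lemma zeta_normSq_one (hu : zetaC k * (starRingEnd ℂ) (zetaC k) = 1) :
    (zetaC k).re^2 + (zetaC k).im^2 = 1 := by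
  have := Complex.mul_conj (zetaC k)
  rw [hu] at this
  have h2 : ((Complex.normSq (zetaC k) : ℝ):ℂ) = ((1:ℝ):ℂ) := by rw [← this]; norm_num
  have h3 := Complex.ofReal_injective h2
  rw [Complex.normSq_apply] at h3
  nlinarith [h3]

lemma two_re_zeta (hd : (starRingEnd ℂ) (zetaC k) = (d:ℂ) - zetaC k) :
    2 * (zetaC k).re = (d:ℝ) := by
  have := congrArg Complex.re hd
  simp [Complex.conj_re, Complex.sub_re, Complex.intCast_re] at this
  linarith

lemma close_aux (re im dr u v : ℝ) (hone : re^2 + im^2 = 1) (htre : 2*re = dr)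
    (hdr : |dr| ≤ 1) (hu2 : |u| ≤ 1/2) (hv2 : |v| ≤ 1/2) :
    (u + v*re)*(u + v*re) + (v*im)*(v*im) < 1 := by
  have h1 : u^2 ≤ 1/4 := by
    have h := mul_le_mul hu2 hu2 (abs_nonneg u) (by norm_num)
    rw [abs_mul_abs_self] at h
    nlinarith
  have h2 : v^2 ≤ 1/4 := by
    have h := mul_le_mul hv2 hv2 (abs_nonneg v) (by norm_num)
    rw [abs_mul_abs_self] at h
    nlinarith
  have habs : 2*re*(u*v) ≤ 1/4 := by
    have h3 : |2*re*(u*v)| ≤ 1/4 := by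
      rw [abs_mul, htre, abs_mul]
      have h := mul_le_mul hdr (mul_le_mul hu2 hv2 (abs_nonneg v) (by norm_num)) (by positivity) (by norm_num)
      linarith
    linarith [le_abs_self (2*re*(u*v))]
  nlinarith

/-- Division with remainder: every complex number is within distance < 1 of `Rk k`. -/
lemma exists_close (hd : (starRingEnd ℂ) (zetaC k) = (d:ℂ) - zetaC k)
    (hu : zetaC k * (starRingEnd ℂ) (zetaC k) = 1) (hdle : |d| ≤ 1)
    (him : 0 < (zetaC k).im) (z : ℂ) :
    ∃ q ∈ Rk k, Complex.normSq (z - q) < 1 := by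
  set ζ := zetaC k
  set y : ℝ := z.im / ζ.im with hy
  set x : ℝ := z.re - y * ζ.re with hx
  set b : ℤ := round y
  set a : ℤ := round x
  refine ⟨(a:ℂ) + (b:ℂ) * ζ, (mem_Rk_iff hd hu _).mpr ⟨a, b, rfl⟩, ?_⟩
  set u : ℝ := x - a
  set v : ℝ := y - b
  have hre : (z - ((a:ℂ) + (b:ℂ)*ζ)).re = u + v * ζ.re := by
    simp [Complex.sub_re, Complex.add_re, Complex.mul_re, Complex.intCast_re, Complex.intCast_im, u, v, hx]
    ring
  have him2 : (z - ((a:ℂ) + (b:ℂ)*ζ)).im = v * ζ.im := by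
    have hζ : ζ.im ≠ 0 := ne_of_gt him
    simp [Complex.sub_im, Complex.add_im, Complex.mul_im, Complex.intCast_re, Complex.intCast_im, u, v, hy]
    field_simp
    try ring
  have hu2 : |u| ≤ 1/2 := abs_sub_round x
  have hv2 : |v| ≤ 1/2 := abs_sub_round y
  have hone := zeta_normSq_one hu
  have htre := two_re_zeta hd
  have hdr : |(d:ℝ)| ≤ 1 := by exact_mod_cast hdle
  rw [Complex.normSq_apply, hre, him2]
  exact close_aux ζ.re ζ.im d u v hone htre hdr hu2 hv2

/-- Every "ideal-like" subset of `Rk k` with a nonzero element has a generator. -/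
lemma exists_generator (hd : (starRingEnd ℂ) (zetaC k) = (d:ℂ) - zetaC k)
    (hu : zetaC k * (starRingEnd ℂ) (zetaC k) = 1) (hdle : |d| ≤ 1)
    (him : 0 < (zetaC k).im)
    (J : Set ℂ) (hJR : J ⊆ (Rk k : Set ℂ))
    (hadd : ∀ x ∈ J, ∀ y ∈ J, x + y ∈ J)
    (hsmul : ∀ α ∈ Rk k, ∀ x ∈ J, α * x ∈ J)
    (hne : ∃ x ∈ J, x ≠ 0) :
    ∃ δ ∈ J, δ ≠ 0 ∧ ∀ x ∈ J, ∃ ρ ∈ Rk k, x = ρ * δ := by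
  have hP : ∃ n : ℕ, ∃ x ∈ J, x ≠ 0 ∧ Complex.normSq x ≤ n := by
    obtain ⟨x, hxJ, hx0⟩ := hne
    obtain ⟨n, hn, -⟩ := normSq_Rk hd hu hdle (hJR hxJ)
    exact ⟨n, x, hxJ, hx0, le_of_eq hn⟩
  classical
  set n₀ := Nat.find hP with hn₀
  obtain ⟨δ, hδJ, hδ0, hδle⟩ := Nat.find_spec hP
  refine ⟨δ, hδJ, hδ0, ?_⟩
  -- minimality: any nonzero element of J has normSq ≥ normSq δ is not quite it;
  -- rather: any element of J with normSq < n₀ is zero... we use: normSq δ ≥ ... 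
  have hmin : ∀ x ∈ J, Complex.normSq x < Complex.normSq δ → x = 0 := by
    intro x hxJ hlt
    by_contra hx0
    obtain ⟨m, hm, hm1⟩ := normSq_Rk hd hu hdle (hJR hxJ)
    have hmlt : m < n₀ := by
      have : Complex.normSq x < n₀ := lt_of_lt_of_le hlt hδle
      rw [hm] at this
      exact_mod_cast this
    exact Nat.find_min hP hmlt ⟨x, hxJ, hx0, le_of_eq hm⟩
  intro x hxJ
  obtain ⟨q, hqR, hq⟩ := exists_close hd hu hdle him (x / δ)
  refine ⟨q, hqR, ?_⟩
  have hsub : x + (-q) * δ ∈ J := hadd x hxJ _ (hsmul _ (neg_mem hqR) _ hδJ)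
  have heq : x + (-q) * δ = δ * (x/δ - q) := by
    field_simp
    ring
  have hlt : Complex.normSq (x + (-q)*δ) < Complex.normSq δ := by
    rw [heq, Complex.normSq_mul]
    calc Complex.normSq δ * Complex.normSq (x/δ - q)
        < Complex.normSq δ * 1 := by
          apply mul_lt_mul_of_pos_left hq
          exact Complex.normSq_pos.mpr hδ0
      _ = Complex.normSq δ := mul_one _
  have := hmin _ hsub hlt
  have : x = q * δ := by linear_combination this
  exact this


/-- In a `(1+ζ_k)`-modular Hermitian lattice `Λ = ℤ[ζ_k]^{s+1}` of signature `(1,s)`, every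
nonzero primitive isotropic vector `e` can be completed to a hyperbolic pair: there exists
an isotropic `f ∈ Λ` with `f ⋆ e = 1 + ζ_k`. -/
theorem exists_hyperbolic_partner
    (k : ℕ) (hk : k ∈ ({3, 4, 6} : Set ℕ)) (s : ℕ) (hs : 1 < s)
    (H : Matrix (Fin (s + 1)) (Fin (s + 1)) ℂ)
    (hentries : ∀ i j, H i j ∈ Rk k)
    (hherm : H.IsHermitian)
    (hpos : Fintype.card {i // 0 < hherm.eigenvalues i} = 1)
    (hneg : Fintype.card {i // hherm.eigenvalues i < 0} = s)
    (hmod : (1 + zetaC k) •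
        {x : Fin (s + 1) → ℂ | ∀ v : Fin (s + 1) → ℂ, (∀ i, v i ∈ Rk k) → hermF H x v ∈ Rk k} =
        {x : Fin (s + 1) → ℂ | ∀ i, x i ∈ Rk k})
    (e : Fin (s + 1) → Rk k) (he : e ≠ 0)
    (hiso : hermF H (cv e) (cv e) = 0)
    (hprim : ∀ (α : ℂ) (w : Fin (s + 1) → Rk k), α ∈ Rk k → cv e = α • cv w →
      ∃ β ∈ Rk k, α * β = 1) :
    ∃ f : Fin (s + 1) → Rk k,
      hermF H (cv f) (cv f) = 0 ∧ hermF H (cv f) (cv e) = 1 + zetaC k := by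
  classical
  obtain ⟨d, hd, him, hdle⟩ := zeta_facts k hk
  have hu := zeta_mul_conj k
  have hconj : ∀ x ∈ Rk k, (starRingEnd ℂ) x ∈ Rk k := fun x hx => conj_mem_Rk hd hu hx
  have hζR : zetaC k ∈ Rk k := Subring.subset_closure rfl
  set θ : ℂ := 1 + zetaC k with hθdef
  set D : Set (Fin (s+1) → ℂ) :=
    {x : Fin (s + 1) → ℂ | ∀ v : Fin (s + 1) → ℂ, (∀ i, v i ∈ Rk k) → hermF H x v ∈ Rk k}
    with hDdef
  have hθ0 : θ ≠ 0 := by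
    intro h
    have h2 : θ.im = 0 := by rw [h]; simp
    rw [hθdef] at h2
    simp only [Complex.add_im, Complex.one_im, zero_add] at h2
    exact (ne_of_gt him) h2
  have hθconj : (starRingEnd ℂ) θ = 1 + (starRingEnd ℂ) (zetaC k) := by
    rw [hθdef, _root_.map_add, _root_.map_one]
  have hζθ : zetaC k * (starRingEnd ℂ) θ = θ := by
    rw [hθconj, hθdef]; linear_combination hu
  have hθR : θ ∈ Rk k := add_mem (one_mem _) hζR
  have hθc0 : (starRingEnd ℂ) θ ≠ 0 := by simp only [ne_eq, map_eq_zero]; exact hθ0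
  -- the modularity condition, restated
  have hmodS : ∀ x : Fin (s+1) → ℂ, (∀ i, x i ∈ Rk k) ↔ ∃ y ∈ D, θ • y = x := by
    intro x
    constructor
    · intro hx
      have hx2 : x ∈ θ • D := by rw [hmod]; exact hx
      exact Set.mem_smul_set.mp hx2
    · rintro ⟨y, hy, rfl⟩
      have hx2 : θ • y ∈ θ • D := Set.smul_mem_smul_set hy
      rw [hmod] at hx2; exact hx2
  have hSD : ∀ x : Fin (s+1) → ℂ, (∀ i, x i ∈ Rk k) → x ∈ D :=
    fun x hx v hv => hermF_mem hconj hentries x v hx hv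
  -- biduality
  have hDD : ∀ x : Fin (s+1) → ℂ, (∀ y ∈ D, hermF H x y ∈ Rk k) → ∀ i, x i ∈ Rk k := by
    intro x hx
    rw [hmodS]
    refine ⟨(1/θ) • x, ?_, ?_⟩
    · intro v hv
      obtain ⟨y, hy, rfl⟩ := (hmodS v).mp hv
      rw [hermF_smul_left, hermF_smul_right]
      have hkey : (starRingEnd ℂ) (1/θ) * θ = zetaC k := by
        rw [map_div₀, _root_.map_one]
        field_simp
        linear_combination -hζθ
      rw [← mul_assoc, hkey]
      exact mul_mem hζR (hx y hy)
    · rw [smul_smul, mul_one_div, div_self hθ0, one_smul]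
  -- all eigenvalues are nonzero, hence H is invertible
  have hall : ∀ i, hherm.eigenvalues i ≠ 0 := by
    intro i hi
    have hpos' := hpos
    rw [Fintype.card_subtype] at hpos'
    have hneg' := hneg
    rw [Fintype.card_subtype] at hneg'
    set P := Finset.univ.filter fun j => 0 < hherm.eigenvalues j with hP
    set N := Finset.univ.filter fun j => hherm.eigenvalues j < 0 with hN
    have hdisj : Disjoint P N := by
      rw [Finset.disjoint_left]
      intro j hjP hjN
      rw [hP, Finset.mem_filter] at hjP
      rw [hN, Finset.mem_filter] at hjN
      linarith [hjP.2, hjN.2]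
    have hsub : P ∪ N ⊆ Finset.univ.erase i := by
      intro j hj
      rw [Finset.mem_erase]
      refine ⟨?_, Finset.mem_univ _⟩
      intro hji
      subst hji
      rcases Finset.mem_union.mp hj with h | h
      · rw [hP, Finset.mem_filter] at h; rw [hi] at h; exact lt_irrefl 0 h.2
      · rw [hN, Finset.mem_filter] at h; rw [hi] at h; exact lt_irrefl 0 h.2
    have hcard := Finset.card_le_card hsub
    rw [Finset.card_union_of_disjoint hdisj, hpos', hneg',
      Finset.card_erase_of_mem (Finset.mem_univ _), Finset.card_univ, Fintype.card_fin] at hcard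
    omega
  have hdet : H.det ≠ 0 := by
    rw [hherm.det_eq_prod_eigenvalues]
    refine Finset.prod_ne_zero_iff.mpr fun i _ => ?_
    exact Complex.ofReal_ne_zero.mpr (hall i)
  have hcve : cv e ≠ 0 := by
    intro h
    apply he
    funext i
    exact Subtype.ext (congrFun h i)
  have hHe : H *ᵥ cv e ≠ 0 := fun h => hcve (Matrix.eq_zero_of_mulVec_eq_zero hdet h)
  obtain ⟨i₀, hi₀⟩ := Function.ne_iff.mp hHe
  -- the ideal J of pairings of dual vectors with e
  set J : Set ℂ := {c | ∃ x ∈ D, hermF H x (cv e) = c} with hJdef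
  have hcvR : ∀ i, cv e i ∈ Rk k := fun i => (e i).2
  have hJR : J ⊆ (Rk k : Set ℂ) := by rintro c ⟨x, hx, rfl⟩; exact hx (cv e) hcvR
  have hJadd : ∀ x ∈ J, ∀ y ∈ J, x + y ∈ J := by
    rintro _ ⟨x, hx, rfl⟩ _ ⟨y, hy, rfl⟩
    refine ⟨x + y, fun v hv => ?_, (hermF_add_left x y (cv e))⟩
    rw [hermF_add_left]
    exact add_mem (hx v hv) (hy v hv)
  have hJsmul : ∀ α ∈ Rk k, ∀ c ∈ J, α * c ∈ J := by
    rintro α hα _ ⟨x, hx, rfl⟩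
    refine ⟨(starRingEnd ℂ) α • x, fun v hv => ?_, ?_⟩
    · rw [hermF_smul_left, Complex.conj_conj]
      exact mul_mem hα (hx v hv)
    · rw [hermF_smul_left, Complex.conj_conj]
  have hJne : ∃ c ∈ J, c ≠ 0 := by
    have hxbD : (fun i => if i = i₀ then (1:ℂ) else 0) ∈ D := by
      refine hSD _ fun i => ?_
      by_cases h : i = i₀
      · rw [if_pos h]; exact one_mem _
      · rw [if_neg h]; exact zero_mem _
    refine ⟨hermF H (fun i => if i = i₀ then 1 else 0) (cv e),
      ⟨(fun i => if i = i₀ then (1:ℂ) else 0), hxbD, rfl⟩, ?_⟩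
    rw [hermF_single]
    intro h0
    apply hi₀
    rw [Matrix.mulVec, dotProduct]
    exact h0
  obtain ⟨δ, hδJ, hδ0, hgen⟩ := exists_generator hd hu hdle him J hJR hJadd hJsmul hJne
  have hδR : δ ∈ Rk k := hJR hδJ
  have hδc0 : (starRingEnd ℂ) δ ≠ 0 := by simp only [ne_eq, map_eq_zero]; exact hδ0
  -- e / δ lies in the lattice
  have heδ : ∀ i, ((1/δ) • cv e) i ∈ Rk k := by
    apply hDD
    intro y hy
    rw [hermF_smul_left]
    obtain ⟨ρ, hρ, hρe⟩ := hgen _ ⟨y, hy, rfl⟩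
    rw [hermF_conj hherm, hρe]
    have hkey : (starRingEnd ℂ) (1/δ) * (starRingEnd ℂ) (ρ * δ) = (starRingEnd ℂ) ρ := by
      rw [map_div₀, _root_.map_one, _root_.map_mul]
      field_simp
    rw [hkey]
    exact hconj _ hρ
  set w : Fin (s+1) → Rk k := fun i => ⟨((1/δ) • cv e) i, heδ i⟩ with hw
  have hcvw : cv e = δ • cv w := by
    funext i
    show cv e i = δ * ((1/δ) * cv e i)
    field_simp
  obtain ⟨β, hβR, hβ⟩ := hprim δ w hδR hcvw
  have h1J : (1:ℂ) ∈ J := by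
    have h := hJsmul β hβR δ hδJ
    rwa [mul_comm, hβ] at h
  obtain ⟨y₀, hy₀D, hy₀⟩ := h1J
  -- construction of the partner f
  set f₀ : Fin (s+1) → ℂ := (θ * (starRingEnd ℂ) (zetaC k)) • y₀ with hf₀
  have hy₁D : ((starRingEnd ℂ) (zetaC k)) • y₀ ∈ D := by
    intro v hv
    rw [hermF_smul_left, Complex.conj_conj]
    exact mul_mem hζR (hy₀D v hv)
  have hf₀S : ∀ i, f₀ i ∈ Rk k := by
    rw [hmodS]
    exact ⟨(starRingEnd ℂ) (zetaC k) • y₀, hy₁D, by rw [smul_smul, ← hf₀]⟩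
  have hf₀e : hermF H f₀ (cv e) = θ := by
    rw [hf₀, hermF_smul_left, hy₀, mul_one, _root_.map_mul, Complex.conj_conj]
    rw [mul_comm]
    exact hζθ
  set f : Fin (s+1) → Rk k := fun i => ⟨f₀ i, hf₀S i⟩ with hf
  have hcvf : cv f = f₀ := rfl
  set a : ℂ := hermF H f₀ f₀ with ha
  have h2 : a = (starRingEnd ℂ) θ * hermF H ((starRingEnd ℂ) (zetaC k) • y₀) f₀ := by
    rw [← hermF_smul_left, smul_smul, ← hf₀]
  have haR2 : hermF H ((starRingEnd ℂ) (zetaC k) • y₀) f₀ ∈ Rk k := hy₁D f₀ hf₀S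
  have hreal : (starRingEnd ℂ) a = a := by rw [ha, ← hermF_conj hherm]
  obtain ⟨p, q, hpq⟩ := (mem_Rk_iff hd hu _).mp (hconj _ haR2)
  have har : a = θ * ((p:ℂ) + (q:ℂ) * zetaC k) := by
    conv_lhs => rw [← hreal, h2, _root_.map_mul, Complex.conj_conj]
    rw [hpq]
  have hsq : zetaC k ^ 2 = (d:ℂ) * zetaC k - 1 := by
    have hu' := hu
    rw [hd] at hu'
    linear_combination -hu'
  have hexp : a = ((p - q : ℤ):ℂ) + ((p + q + q*d : ℤ):ℂ) * zetaC k := by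
    rw [har, hθdef]
    push_cast
    linear_combination (q:ℂ) * hsq
  have haim : a.im = 0 := by
    have h3 := congrArg Complex.im hreal
    simp only [Complex.conj_im] at h3
    linarith
  have hq0 : p + q + q*d = 0 := by
    have h4 := congrArg Complex.im hexp
    rw [haim] at h4
    simp only [Complex.add_im, Complex.intCast_im, Complex.mul_im, Complex.intCast_re,
      Complex.intCast_im, zero_mul, add_zero, zero_add] at h4
    have h5 : ((p + q + q*d : ℤ):ℝ) = 0 := by
      rcases mul_eq_zero.mp h4.symm with h | h
      · exact h
      · exact absurd h (ne_of_gt him)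
    exact_mod_cast h5
  have havalC : a = (p:ℂ) - (q:ℂ) := by
    rw [hexp, show ((p + q + q*d : ℤ):ℂ) = 0 by exact_mod_cast hq0]
    push_cast
    ring
  have htrC : θ + (starRingEnd ℂ) θ = 2 + (d:ℂ) := by
    rw [hθconj, hθdef, hd]
    ring
  have hq0C : (p:ℂ) + (q:ℂ) + (q:ℂ)*(d:ℂ) = 0 := by exact_mod_cast hq0
  -- the final vector
  refine ⟨fun i => f i + ((q : ℤ) : Rk k) * e i, ?_, ?_⟩
  all_goals
    have hcvf' : cv (fun i => f i + ((q : ℤ) : Rk k) * e i) = f₀ + (q:ℂ) • cv e := by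
      funext i
      show ((f i + ((q : ℤ) : Rk k) * e i : Rk k) : ℂ) = f₀ i + (q:ℂ) * cv e i
      push_cast
      rfl
  · rw [hcvf']
    simp only [hermF_add_left, hermF_add_right, hermF_smul_left, hermF_smul_right]
    rw [hermF_conj hherm (cv e) f₀, hf₀e, hiso, map_intCast, ← ha]
    linear_combination havalC + (q:ℂ) * htrC + hq0C
  · rw [hcvf']
    simp only [hermF_add_left, hermF_smul_left]
    rw [hf₀e, hiso, map_intCast]
    ring

end
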